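/- Let p be a prime. Then the number F_{g ANY, h ANY}(p) of pairs (g,h) with 1 ≤ g,h ≤ p-1 such that g^h ≡ h (mod p) satisfies |F_{g ANY, h ANY}(p) − (p-1)| ≤ d(p-1) · σ(p-1) · √p · (1 + ln p). -/

import Mathlib

open Finset Polynomial

/-- For each `h`, the number of `g ∈ [1, p-1]` with `g^h ≡ h (mod p)` is at most
`gcd h (p-1)`. -/
lemma fiber_card_le (p : ℕ) (hp : p.Prime) (h : ℕ) (hh1 : 1 ≤ h) (hhn : h ≤ p - 1)
    (T : Finset ℕ) (hT : ∀ g ∈ T, 1 ≤ g ∧ g ≤ p - 1 ∧ g ^ h ≡ h [MOD p]) :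
    T.card ≤ Nat.gcd h (p - 1) := by
  haveI : Fact p.Prime := ⟨hp⟩
  have hnp : p - 1 < p := Nat.sub_lt hp.pos one_pos
  rcases T.eq_empty_or_nonempty with rfl | ⟨g0, hg0⟩
  · simp
  obtain ⟨hg01, hg0n, hg0e⟩ := hT g0 hg0
  set d := Nat.gcd h (p - 1) with hd
  have hdpos : 0 < d := Nat.gcd_pos_of_pos_left _ hh1
  -- h is nonzero mod p
  have hcast : ∀ a : ℕ, 1 ≤ a → a ≤ p - 1 → (a : ZMod p) ≠ 0 := by
    intro a ha1 han ha0
    rw [ZMod.natCast_eq_zero_iff] at ha0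
    have := Nat.le_of_dvd ha1 ha0
    omega
  have hh0 : (h : ZMod p) ≠ 0 := hcast h hh1 hhn
  have hg00 : (g0 : ZMod p) ≠ 0 := hcast g0 hg01 hg0n
  have hg0pow : (g0 : ZMod p) ^ h = (h : ZMod p) := by
    have := (ZMod.natCast_eq_natCast_iff _ _ _).mpr hg0e
    push_cast at this; exact this
  -- injection into d-th roots of unity
  have key : ∀ g ∈ T, ((g : ZMod p) * (g0 : ZMod p)⁻¹) ∈ (nthRoots d (1 : ZMod p)).toFinset := by
    intro g hg
    obtain ⟨hg1, hgn, hge⟩ := hT g hg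
    have hgpow : (g : ZMod p) ^ h = (h : ZMod p) := by
      have := (ZMod.natCast_eq_natCast_iff _ _ _).mpr hge
      push_cast at this; exact this
    set x : ZMod p := (g : ZMod p) * (g0 : ZMod p)⁻¹ with hx
    have hxh : x ^ h = 1 := by
      rw [hx, mul_pow, inv_pow, hgpow, hg0pow, mul_inv_cancel₀ hh0]
    have hx0 : x ≠ 0 := by
      intro h0
      rw [h0, zero_pow (by omega)] at hxh
      exact zero_ne_one hxh
    have hxn : x ^ (p - 1) = 1 := ZMod.pow_card_sub_one_eq_one hx0
    have hxd : x ^ d = 1 := by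
      rw [← orderOf_dvd_iff_pow_eq_one] at hxh hxn ⊢
      exact Nat.dvd_gcd hxh hxn
    rw [Multiset.mem_toFinset, mem_nthRoots hdpos]
    exact hxd
  have hinj : Set.InjOn (fun g : ℕ => (g : ZMod p) * (g0 : ZMod p)⁻¹) T := by
    intro a ha b hb hab
    obtain ⟨ha1, han, -⟩ := hT a ha
    obtain ⟨hb1, hbn, -⟩ := hT b hb
    have : (a : ZMod p) = (b : ZMod p) :=
      mul_right_cancel₀ (inv_ne_zero hg00) hab
    have := (ZMod.natCast_eq_natCast_iff' _ _ _).mp this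
    rwa [Nat.mod_eq_of_lt (by omega), Nat.mod_eq_of_lt (by omega)] at this
  calc T.card ≤ (nthRoots d (1 : ZMod p)).toFinset.card :=
        Finset.card_le_card_of_injOn _ key hinj
    _ ≤ Multiset.card (nthRoots d (1 : ZMod p)) := Multiset.toFinset_card_le _
    _ ≤ d := card_nthRoots d 1

/-- Sum of gcds bound. -/
lemma sum_gcd_le (n : ℕ) (hn : 1 ≤ n) :
    ∑ h ∈ Icc 1 n, Nat.gcd h n ≤ n * n.divisors.card := by
  classical
  have hmaps : ∀ h ∈ Icc 1 n, Nat.gcd h n ∈ n.divisors := by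
    intro h hh
    exact Nat.mem_divisors.mpr ⟨Nat.gcd_dvd_right _ _, by omega⟩
  rw [← Finset.sum_fiberwise_of_maps_to hmaps]
  have : ∀ d ∈ n.divisors,
      (∑ h ∈ (Icc 1 n).filter (fun h => Nat.gcd h n = d), Nat.gcd h n) ≤ n := by
    intro d hd
    have hdvd : d ∣ n := (Nat.mem_divisors.mp hd).1
    have hdpos : 0 < d := Nat.pos_of_mem_divisors hd
    calc (∑ h ∈ (Icc 1 n).filter (fun h => Nat.gcd h n = d), Nat.gcd h n)
        = ∑ h ∈ (Icc 1 n).filter (fun h => Nat.gcd h n = d), d := by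
          apply Finset.sum_congr rfl
          intro h hh
          exact (Finset.mem_filter.mp hh).2
      _ = ((Icc 1 n).filter (fun h => Nat.gcd h n = d)).card * d := by
          rw [Finset.sum_const, smul_eq_mul]
      _ ≤ (n / d) * d := by
          apply Nat.mul_le_mul_right
          have hsub : (Icc 1 n).filter (fun h => Nat.gcd h n = d) ⊆
              (Ioc 0 n).filter (fun h => d ∣ h) := by
            intro h hh
            obtain ⟨hh1, hh2⟩ := Finset.mem_filter.mp hh
            rw [Finset.mem_Icc] at hh1
            refine Finset.mem_filter.mpr ⟨Finset.mem_Ioc.mpr ⟨by omega, hh1.2⟩, ?_⟩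
            rw [← hh2]; exact Nat.gcd_dvd_left _ _
          calc ((Icc 1 n).filter (fun h => Nat.gcd h n = d)).card
              ≤ ((Ioc 0 n).filter (fun h => d ∣ h)).card := Finset.card_le_card hsub
            _ = n / d := Nat.Ioc_filter_dvd_card_eq_div n d
      _ ≤ n := Nat.div_mul_le_self n d
  calc (∑ d ∈ n.divisors, ∑ h ∈ (Icc 1 n).filter (fun h => Nat.gcd h n = d), Nat.gcd h n)
      ≤ ∑ d ∈ n.divisors, n := Finset.sum_le_sum this
    _ = n.divisors.card * n := by rw [Finset.sum_const, smul_eq_mul]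
    _ = n * n.divisors.card := Nat.mul_comm _ _

/-- For a prime `p`, the number of pairs `(g,h)` with `1 ≤ g,h ≤ p-1` and `g^h ≡ h (mod p)`
(no further restrictions) differs from `p-1` by at most `d(p-1) σ(p-1) √p (1 + ln p)`. -/
theorem fixed_points_gANY_hANY (p : ℕ) (hp : p.Prime) :
    |(Nat.card {gh : ℕ × ℕ // 1 ≤ gh.1 ∧ gh.1 ≤ p - 1 ∧ 1 ≤ gh.2 ∧ gh.2 ≤ p - 1 ∧
        gh.1 ^ gh.2 ≡ gh.2 [MOD p]} : ℝ) - ((p - 1 : ℕ) : ℝ)| ≤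
    ((p - 1).divisors.card : ℝ) * (∑ e ∈ (p - 1).divisors, (e : ℝ)) *
      Real.sqrt p * (1 + Real.log p) := by
  classical
  set n := p - 1 with hn
  have hn1 : 1 ≤ n := by have := hp.two_le; omega
  -- identify the Nat.card with a Finset card
  set s : Finset (ℕ × ℕ) :=
    ((Icc 1 n) ×ˢ (Icc 1 n)).filter (fun gh => gh.1 ^ gh.2 ≡ gh.2 [MOD p]) with hs
  have hcard : Nat.card {gh : ℕ × ℕ // 1 ≤ gh.1 ∧ gh.1 ≤ n ∧ 1 ≤ gh.2 ∧ gh.2 ≤ n ∧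
      gh.1 ^ gh.2 ≡ gh.2 [MOD p]} = s.card := by
    rw [← Nat.card_eq_finsetCard s]
    apply Nat.card_congr
    apply Equiv.subtypeEquivRight
    intro x
    simp only [hs, Finset.mem_filter, Finset.mem_product, Finset.mem_Icc]
    tauto
  -- bound the card
  have hbound : s.card ≤ n * n.divisors.card := by
    have hfib : s.card = ∑ h ∈ Icc 1 n, (s.filter (fun gh => gh.2 = h)).card := by
      apply Finset.card_eq_sum_card_fiberwise
      intro x hx
      simp only [hs, Finset.mem_filter, Finset.mem_product] at hx
      have hx' : x ∈ ((Icc 1 n) ×ˢ (Icc 1 n)).filter (fun gh => gh.1 ^ gh.2 ≡ gh.2 [MOD p]) := hx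
      exact (Finset.mem_product.mp (Finset.mem_filter.mp hx').1).2
    rw [hfib]
    calc (∑ h ∈ Icc 1 n, (s.filter (fun gh => gh.2 = h)).card)
        ≤ ∑ h ∈ Icc 1 n, Nat.gcd h n := by
          apply Finset.sum_le_sum
          intro h hh
          rw [Finset.mem_Icc] at hh
          have himg : ((s.filter (fun gh => gh.2 = h)).image Prod.fst).card
              ≤ Nat.gcd h n := by
            apply fiber_card_le p hp h hh.1 hh.2
            intro g hg
            simp only [Finset.mem_image] at hg
            obtain ⟨gh, hgh, rfl⟩ := hg
            obtain ⟨hgh1, hgh2⟩ := Finset.mem_filter.mp hgh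
            simp only [hs, Finset.mem_filter, Finset.mem_product, Finset.mem_Icc] at hgh1
            refine ⟨hgh1.1.1.1, hgh1.1.1.2, ?_⟩
            rw [hgh2] at hgh1
            exact hgh1.2
          refine le_trans (le_of_eq ?_) himg
          rw [Finset.card_image_of_injOn]
          intro a ha b hb hab
          have ha2 := (Finset.mem_filter.mp ha).2
          have hb2 := (Finset.mem_filter.mp hb).2
          exact Prod.ext hab (ha2.trans hb2.symm)
      _ ≤ n * n.divisors.card := sum_gcd_le n hn1
  -- real arithmetic
  rw [hcard]
  have hD1 : (1 : ℝ) ≤ n.divisors.card := by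
    have : 0 < n.divisors.card := by
      apply Finset.card_pos.mpr
      exact ⟨n, Nat.mem_divisors.mpr ⟨dvd_refl n, by omega⟩⟩
    exact_mod_cast this
  have hσ : (n : ℝ) ≤ ∑ e ∈ n.divisors, (e : ℝ) := by
    exact Finset.single_le_sum (f := fun e : ℕ => (e : ℝ)) (fun i _ => by positivity)
      (Nat.mem_divisors.mpr ⟨dvd_refl n, by omega⟩)
  have hsqrt : (1 : ℝ) ≤ Real.sqrt p := by
    rw [show (1 : ℝ) = Real.sqrt 1 by simp]
    apply Real.sqrt_le_sqrt
    exact_mod_cast hp.one_lt.le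
  have hlog : (1 : ℝ) ≤ 1 + Real.log p := by
    have : 0 ≤ Real.log p := Real.log_nonneg (by exact_mod_cast hp.one_lt.le)
    linarith
  have hNR : (s.card : ℝ) ≤ (n : ℝ) * n.divisors.card := by exact_mod_cast hbound
  have hnR : (n : ℝ) ≤ (n : ℝ) * n.divisors.card := by
    have h0 : (0 : ℝ) ≤ (n : ℝ) := Nat.cast_nonneg n
    nlinarith
  have hstep : (n : ℝ) * n.divisors.card ≤
      ((n).divisors.card : ℝ) * (∑ e ∈ n.divisors, (e : ℝ)) * Real.sqrt p * (1 + Real.log p) := by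
    have h1 : (n : ℝ) * n.divisors.card = (n.divisors.card : ℝ) * n * 1 * 1 := by ring
    rw [h1]
    have hDpos : (0 : ℝ) ≤ n.divisors.card := by positivity
    have hσpos : (0 : ℝ) ≤ ∑ e ∈ n.divisors, (e : ℝ) := le_trans (by positivity) hσ
    apply mul_le_mul
    · apply mul_le_mul
      · exact mul_le_mul le_rfl hσ (by positivity) hDpos
      · exact hsqrt
      · norm_num
      · positivity
    · exact hlog
    · norm_num
    · positivity
  rw [abs_sub_le_iff]
  constructor
  · have h0 : (0 : ℝ) ≤ (n : ℝ) := by positivity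
    linarith
  · have h0 : (0 : ℝ) ≤ (s.card : ℝ) := by positivity
    linarith
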